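/- Let x, y be a free basis of F_2 and let ψ_m : F_2 → D_m be the homomorphism to the dihedral group D_m = ⟨t, s | t² = 1, s^m = 1, tst = s⁻¹⟩ sending x ↦ t and y ↦ s. Then the subgroup H_m = ψ_m⁻¹(⟨t⟩) has index m in F_2, and for w_k = x[x,y]^k one has w_k ∈ H_m if and only if m divides 2k; moreover w_k² ∈ H_m for every k ≥ 1. -/

import Mathlib

/-- `R` is a retract of the ambient group: there is an endomorphism with image `R`
restricting to the identity on `R` (equivalently, an idempotent endomorphism with image `R`). -/
def IsRetract {G : Type*} [Group G] (R : Subgroup G) : Prop :=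
  ∃ r : G →* G, r.range = R ∧ ∀ x ∈ R, r x = x

/-- The subgroup `H` is free of rank `m`. -/
def HasFreeRank {G : Type*} [Group G] (H : Subgroup G) (m : ℕ) : Prop :=
  ∃ φ : FreeGroup (Fin m) →* G, Function.Injective φ ∧ φ.range = H

namespace DihedralExample

def x : FreeGroup (Fin 2) := FreeGroup.of 0
def y : FreeGroup (Fin 2) := FreeGroup.of 1

/-- The homomorphism `ψ_m : F₂ → D_m` with `x ↦ t = sr 0` and `y ↦ s = r 1`. -/
def ψ (m : ℕ) : FreeGroup (Fin 2) →* DihedralGroup m :=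
  FreeGroup.lift (fun i => if i = 0 then DihedralGroup.sr 0 else DihedralGroup.r 1)

/-- `H_m = ψ_m⁻¹(⟨t⟩)`. -/
def Hm (m : ℕ) : Subgroup (FreeGroup (Fin 2)) :=
  Subgroup.comap (ψ m) (Subgroup.zpowers (DihedralGroup.sr 0))

open scoped commutatorElement in
def wk (k : ℕ) : FreeGroup (Fin 2) := x * ⁅x, y⁆ ^ k

open DihedralGroup

lemma psi_x (m : ℕ) : ψ m x = sr 0 := by simp [ψ, x]
lemma psi_y (m : ℕ) : ψ m y = r 1 := by simp [ψ, y]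

open scoped commutatorElement in
lemma comm_eq (m : ℕ) : ⁅(sr 0 : DihedralGroup m), r 1⁆ = r (-2 : ZMod m) := by
  have h1 : (sr 0 : DihedralGroup m)⁻¹ = sr 0 := rfl
  have h2 : (r 1 : DihedralGroup m)⁻¹ = r (-1) := rfl
  rw [commutatorElement_def, h1, h2]
  simp only [sr_mul_r, sr_mul_sr, r_mul_r]
  ring_nf

lemma r_pow (m : ℕ) (a : ZMod m) (k : ℕ) : (r a) ^ k = r ((k : ZMod m) * a) := by
  induction k with
  | zero => simp
  | succ n ih => rw [pow_succ, ih, r_mul_r]; push_cast; ring_nf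

lemma psi_wk (m : ℕ) (k : ℕ) : ψ m (wk k) = sr (-(2 * k : ℕ) : ZMod m) := by
  rw [wk, map_mul, map_pow, map_commutatorElement, psi_x, psi_y, comm_eq, r_pow,
    sr_mul_r]
  push_cast
  ring_nf

lemma sr_sq (m : ℕ) (a : ZMod m) : (sr a) ^ 2 = 1 := by
  rw [pow_two, sr_mul_sr, sub_self, one_def]

lemma mem_zpowers_sr_iff (m : ℕ) (a : ZMod m) :
    sr a ∈ Subgroup.zpowers (sr 0 : DihedralGroup m) ↔ a = 0 := by
  constructor
  · rintro ⟨n, hn⟩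
    dsimp only at hn
    rcases Int.even_or_odd n with ⟨j, hj⟩ | ⟨j, hj⟩
    · exfalso
      rw [hj, ← two_mul, zpow_mul] at hn
      norm_num [show ((sr 0 : DihedralGroup m) ^ (2:ℤ)) = 1 from sr_sq m 0] at hn
      rw [one_def] at hn
      cases hn
    · rw [hj, zpow_add, zpow_mul, zpow_one,
        show ((sr 0 : DihedralGroup m) ^ (2:ℤ)) = 1 from sr_sq m 0, one_zpow, one_mul] at hn
      exact (sr.injEq _ _).mp hn.symm
  · rintro rfl
    exact ⟨1, by simp⟩

lemma psi_surjective (m : ℕ) [NeZero m] : Function.Surjective (ψ m) := by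
  rintro (a | a)
  · refine ⟨y ^ a.val, ?_⟩
    rw [map_pow, psi_y, r_one_pow]
    simp [ZMod.natCast_val, ZMod.cast_id]
  · refine ⟨x * y ^ a.val, ?_⟩
    rw [map_mul, map_pow, psi_x, psi_y, r_one_pow, sr_mul_r]
    simp [ZMod.natCast_val, ZMod.cast_id]

theorem dihedral_example (m : ℕ) (hm : 1 ≤ m) :
    (Hm m).index = m ∧ (∀ k : ℕ, wk k ∈ Hm m ↔ m ∣ 2 * k) ∧
      (∀ k : ℕ, 1 ≤ k → (wk k) ^ 2 ∈ Hm m) := by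
  haveI : NeZero m := ⟨by omega⟩
  refine ⟨?_, ?_, ?_⟩
  · rw [Hm, Subgroup.index_comap_of_surjective _ (psi_surjective m)]
    have hcard : Nat.card (DihedralGroup m) = 2 * m := by
      rw [Nat.card_eq_fintype_card, DihedralGroup.card]
    have h2 : Nat.card (Subgroup.zpowers (sr 0 : DihedralGroup m)) = 2 := by
      rw [Nat.card_zpowers, orderOf_sr]
    have := Subgroup.card_mul_index (Subgroup.zpowers (sr 0 : DihedralGroup m))
    rw [h2, hcard] at this
    omega
  · intro k
    rw [Hm, Subgroup.mem_comap, psi_wk, mem_zpowers_sr_iff, neg_eq_zero,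
      ZMod.natCast_eq_zero_iff]
  · intro k _
    rw [Hm, Subgroup.mem_comap, map_pow, psi_wk, sr_sq]
    exact one_mem _

end DihedralExample
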